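/- Let Γ = (V, m, τ) be a weak W-graph for the finite Coxeter system (W,S) with representation ρ on ℂV, and let A ⊆ Δ. Then the image of the operator R(A) on ℂV is precisely the linear span of V(A,−). -/

import Mathlib

noncomputable section

/-- The standard parabolic subgroup `W(A)` of a Coxeter group, generated by the simple
reflections indexed by elements of `A`. -/
def parabolicSubgroup {B W : Type*} [Group W] {M : CoxeterMatrix B}
    (cs : CoxeterSystem M W) (A : Set B) : Subgroup W :=
  Subgroup.closure (cs.simple '' A)

/-- The signed averaging operator `R(A) = |W(A)|⁻¹ ∑_{g ∈ W(A)} ε(g) ρ(g)`. -/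
def Rop {B W V : Type*} [Group W] {M : CoxeterMatrix B} (cs : CoxeterSystem M W)
    (ρ : Representation ℂ W (V → ℂ)) (ε : W →* ℂ) (A : Set B) :
    (V → ℂ) →ₗ[ℂ] (V → ℂ) :=
  (Nat.card (parabolicSubgroup cs A) : ℂ)⁻¹ •
    ∑ᶠ g : (parabolicSubgroup cs A), ε (g : W) • ρ (g : W)

/-- the image of `R(A)` on `ℂV` is precisely the span of `V(A,−)`. -/
theorem weak_W_graph_range_R {B W V : Type*} [Group W] [Finite W]
    [Fintype V] [DecidableEq V] [DecidableEq B]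
    {M : CoxeterMatrix B} (cs : CoxeterSystem M W)
    (m : V → V → ℂ) (τ : V → Finset B)
    (ρ : Representation ℂ W (V → ℂ))
    (hρ : ∀ (i : B) (v : V),
      ρ (cs.simple i) (Pi.single v 1) =
        if i ∈ τ v then -Pi.single v 1
        else Pi.single v 1 - ∑ u : V, (if i ∈ τ u then m u v • (Pi.single u 1 : V → ℂ) else 0))
    (ε : W →* ℂ) (hε : ∀ i : B, ε (cs.simple i) = -1)
    (A : Finset B) :
    LinearMap.range (Rop cs ρ ε (A : Set B)) =
      Submodule.span ℂ ((fun v : V => Pi.single v (1 : ℂ)) '' {v | A ⊆ τ v}) := by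
  classical
  haveI : Fintype (parabolicSubgroup cs (A : Set B)) := Fintype.ofFinite _
  set H := parabolicSubgroup cs (A : Set B) with hHdef
  -- decomposition of an arbitrary vector along the standard basis
  have hdecomp : ∀ y : V → ℂ, y = ∑ u : V, y u • (Pi.single u 1 : V → ℂ) := by
    intro y; ext v; simp [Pi.single_apply, eq_comm]
  -- the coefficient lemma: if i ∉ τ v then ρ(sᵢ) fixes the v-coordinate
  have hcoeff : ∀ (i : B) (v : V), i ∉ τ v → ∀ y : V → ℂ,
      ρ (cs.simple i) y v = y v := by
    intro i v hiv y
    conv_lhs => rw [hdecomp y]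
    rw [map_sum, Finset.sum_apply]
    have hterm : ∀ u : V, (ρ (cs.simple i) (y u • (Pi.single u 1 : V → ℂ))) v
        = y u * (if v = u then 1 else 0) := by
      intro u
      rw [map_smul]
      rw [hρ i u]
      by_cases hu : i ∈ τ u
      · have huv : v ≠ u := fun h => hiv (h ▸ hu)
        simp [hu, Pi.single_apply, huv]
      · have hz : (∑ w : V, (if i ∈ τ w then m w u • (Pi.single w 1 : V → ℂ) else 0)) v = 0 := by
          rw [Finset.sum_apply]
          refine Finset.sum_eq_zero fun w _ => ?_
          by_cases hw : i ∈ τ w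
          · have hwv : w ≠ v := fun h => hiv (h ▸ hw)
            simp [hw, Pi.single_apply, hwv]
          · simp [hw]
        simp only [hu, if_false, Pi.smul_apply, Pi.sub_apply, hz, sub_zero, smul_eq_mul,
          Pi.single_apply]
    rw [Finset.sum_congr rfl fun u _ => hterm u]
    simp [mul_ite, mul_one, mul_zero]
  -- applying Rop
  have hRapply : ∀ x : V → ℂ, Rop cs ρ ε (A : Set B) x
      = (Nat.card H : ℂ)⁻¹ • ∑ g : H, ε (g : W) • ρ (g : W) x := by
    intro x
    rw [Rop, finsum_eq_sum_of_fintype]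
    simp [← hHdef, LinearMap.sum_apply]
    convert rfl
  -- fixed basis vectors
  have hfix : ∀ v : V, A ⊆ τ v → ∀ g : W, g ∈ H →
      ρ g (Pi.single v 1) = ε g • (Pi.single v 1 : V → ℂ) := by
    intro v hv g hg
    rw [hHdef, parabolicSubgroup] at hg
    induction hg using Subgroup.closure_induction with
    | mem x hx =>
      obtain ⟨i, hiA, rfl⟩ := hx
      rw [hρ i v, if_pos (hv hiA), hε i]
      ext w; simp
    | one => simp
    | mul x y hx hy ihx ihy =>
      rw [map_mul, Module.End.mul_apply, ihy, map_smul, ihx, smul_smul,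
        mul_comm (ε y) (ε x), ← map_mul]
    | inv x hx ihx =>
      have h1 : ε x⁻¹ * ε x = 1 := by rw [← map_mul, inv_mul_cancel, map_one]
      have h2 : ρ x⁻¹ (ρ x (Pi.single v 1)) = (Pi.single v 1 : V → ℂ) := by
        rw [← Module.End.mul_apply, ← map_mul, inv_mul_cancel, map_one, Module.End.one_apply]
      have h3 : ρ x⁻¹ (ε x • (Pi.single v 1 : V → ℂ)) = (Pi.single v 1 : V → ℂ) := by
        rw [← ihx]; exact h2
      have h4 : ε x • ρ x⁻¹ (Pi.single v 1) = (Pi.single v 1 : V → ℂ) := by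
        rw [← map_smul]; exact h3
      calc ρ x⁻¹ (Pi.single v 1)
          = (ε x⁻¹ * ε x) • ρ x⁻¹ (Pi.single v 1) := by rw [h1, one_smul]
        _ = ε x⁻¹ • (ε x • ρ x⁻¹ (Pi.single v 1)) := by rw [smul_smul]
        _ = ε x⁻¹ • (Pi.single v 1 : V → ℂ) := by rw [h4]
  -- ε squares to 1 on H
  have hε2 : ∀ g : W, g ∈ H → ε g * ε g = 1 := by
    intro g hg
    rw [hHdef, parabolicSubgroup] at hg
    induction hg using Subgroup.closure_induction with
    | mem x hx => obtain ⟨i, _, rfl⟩ := hx; rw [hε i]; ring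
    | one => simp
    | mul x y hx hy ihx ihy =>
      rw [map_mul]
      calc ε x * ε y * (ε x * ε y) = (ε x * ε x) * (ε y * ε y) := by ring
        _ = 1 := by rw [ihx, ihy, one_mul]
    | inv x hx ihx =>
      have h1 : ε x⁻¹ * ε x = 1 := by rw [← map_mul, inv_mul_cancel, map_one]
      have h2 : ε x⁻¹ = ε x := by
        calc ε x⁻¹ = ε x⁻¹ * (ε x * ε x) := by rw [ihx, mul_one]
          _ = (ε x⁻¹ * ε x) * ε x := by ring
          _ = ε x := by rw [h1, one_mul]
      rw [h2]; exact ihx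
  -- R fixes basis vectors in V(A,−)
  have hcard : (Nat.card H : ℂ) ≠ 0 := by
    rw [Nat.card_eq_fintype_card]
    exact_mod_cast Fintype.card_ne_zero
  have hRfix : ∀ v : V, A ⊆ τ v →
      Rop cs ρ ε (A : Set B) (Pi.single v 1) = Pi.single v 1 := by
    intro v hv
    rw [hRapply]
    have hsum : (∑ g : H, ε (g : W) • ρ (g : W) (Pi.single v 1))
        = (Nat.card H : ℂ) • (Pi.single v 1 : V → ℂ) := by
      rw [Finset.sum_congr rfl fun (g : H) _ => by
        rw [hfix v hv (g : W) g.2, smul_smul, hε2 (g : W) g.2, one_smul]]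
      rw [Finset.sum_const, Finset.card_univ, Nat.card_eq_fintype_card]
      exact (Nat.cast_smul_eq_nsmul ℂ _ _).symm
    rw [hsum, smul_smul, inv_mul_cancel₀ hcard, one_smul]
  -- vanishing of coordinates outside V(A,−)
  have hzero : ∀ (x : V → ℂ) (v : V), ¬ A ⊆ τ v → Rop cs ρ ε (A : Set B) x v = 0 := by
    intro x v hv
    obtain ⟨i, hiA, hiv⟩ := Finset.not_subset.mp hv
    have hsH : cs.simple i ∈ H := Subgroup.subset_closure ⟨i, hiA, rfl⟩
    set s : H := ⟨cs.simple i, hsH⟩ with hs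
    rw [hRapply]
    have hsum0 : (∑ g : H, (ε (g : W) • ρ (g : W) x) v) = 0 := by
      have key := Equiv.sum_comp (Equiv.mulLeft s) (fun g : H => (ε (g : W) • ρ (g : W) x) v)
      have hneg : ∀ g : H, (fun g : H => (ε (g : W) • ρ (g : W) x) v) (Equiv.mulLeft s g)
          = - (ε (g : W) • ρ (g : W) x) v := by
        intro g
        have hco : ((s * g : H) : W) = cs.simple i * (g : W) := rfl
        have hval : ρ ((s * g : H) : W) x v = ρ (g : W) x v := by
          rw [hco, map_mul, Module.End.mul_apply, hcoeff i v hiv]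
        have hep : ε ((s * g : H) : W) = - ε (g : W) := by
          rw [hco, map_mul, hε i]; ring
        simp only [Equiv.coe_mulLeft, Pi.smul_apply, smul_eq_mul, hval, hep]
        ring
      rw [Finset.sum_congr rfl fun g _ => hneg g, Finset.sum_neg_distrib] at key
      linear_combination (-(1:ℂ)/2) * key
    have happ : (((Nat.card H : ℂ)⁻¹ • ∑ g : H, ε (g : W) • ρ (g : W) x) v)
        = (Nat.card H : ℂ)⁻¹ * ∑ g : H, (ε (g : W) • ρ (g : W) x) v := by
      simp [Finset.sum_apply]
    rw [happ, hsum0, mul_zero]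
  -- assemble
  apply le_antisymm
  · rintro y hy
    obtain ⟨x, rfl⟩ := hy
    rw [hdecomp (Rop cs ρ ε (A : Set B) x)]
    refine Submodule.sum_mem _ fun v _ => ?_
    by_cases hv : A ⊆ τ v
    · exact Submodule.smul_mem _ _ (Submodule.subset_span ⟨v, hv, rfl⟩)
    · rw [hzero x v hv, zero_smul]; exact Submodule.zero_mem _
  · rw [Submodule.span_le]
    rintro _ ⟨v, hv, rfl⟩
    exact ⟨Pi.single v 1, hRfix v hv⟩

end
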